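/- arXiv:1312.5518 — 2 statements merged into one kernel-verified Lean document; each statement's English description precedes it below -/
import Mathlib

section
/- Let S be a semigroup that is the disjoint union of free monogenic subsemigroups ⟨a⟩, ⟨b⟩, ⟨c⟩. Then at least one of ⟨a⟩∪⟨b⟩, ⟨a⟩∪⟨c⟩, ⟨b⟩∪⟨c⟩ is a subsemigroup of S. -/
/-- `pw a n` is `a ^ n` for `n ≥ 1` (with junk value `a` at `n = 0`),
defined in any magma. -/
def pw {S : Type*} [Mul S] (a : S) : ℕ → S
  | 0 => a
  | 1 => a
  | n + 2 => pw a (n + 1) * a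

/-- The monogenic subsemigroup `⟨a⟩ = {a^n : n ≥ 1}`. -/
def genSet {S : Type*} [Mul S] (a : S) : Set S := {x | ∃ n, 1 ≤ n ∧ pw a n = x}

/-- `a` has infinite order: its positive powers are pairwise distinct,
i.e. `⟨a⟩` is free monogenic. -/
def InfOrder {S : Type*} [Mul S] (a : S) : Prop :=
  ∀ m n : ℕ, 1 ≤ m → 1 ≤ n → pw a m = pw a n → m = n

/-- A union of two of the three monogenic pieces is closed under multiplication. -/
def IsClosed2 {S : Type*} [Semigroup S] (x y : S) : Prop :=
  ∀ u ∈ genSet x ∪ genSet y, ∀ v ∈ genSet x ∪ genSet y, u * v ∈ genSet x ∪ genSet y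

lemma pw_succ {S : Type*} [Mul S] (a : S) (n : ℕ) (hn : 1 ≤ n) :
    pw a (n + 1) = pw a n * a := by
  match n, hn with
  | n + 1, _ => rfl

lemma pw_mul {S : Type*} [Semigroup S] (a : S) (m : ℕ) (hm : 1 ≤ m) :
    ∀ n, 1 ≤ n → pw a m * pw a n = pw a (m + n)
  | 1, _ => (pw_succ a m hm).symm
  | n + 2, _ => by
    rw [pw_succ a (n + 1) (by omega), ← mul_assoc, pw_mul a m hm (n + 1) (by omega),
      ← pw_succ a (m + (n + 1)) (by omega)]
    congr 1

/-- If `x*y = x^k`, then `x^m * y` is a power of `x`. -/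
lemma step_left {S : Type*} [Semigroup S] {x y : S} {k : ℕ} (hk : 1 ≤ k)
    (h : x * y = pw x k) : ∀ m, 1 ≤ m → ∃ j, 1 ≤ j ∧ pw x m * y = pw x j
  | 1, _ => ⟨k, hk, h⟩
  | m + 2, _ => by
    refine ⟨m + 1 + k, by omega, ?_⟩
    rw [pw_succ x (m + 1) (by omega), mul_assoc, h, pw_mul x (m + 1) (by omega) k hk]

/-- If `x*y = x^k`, then all `x^m * y^n` lie in `⟨x⟩`. -/
lemma Lx {S : Type*} [Semigroup S] {x y : S} {k : ℕ} (hk : 1 ≤ k)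
    (h : x * y = pw x k) (m : ℕ) (hm : 1 ≤ m) :
    ∀ n, 1 ≤ n → ∃ j, 1 ≤ j ∧ pw x m * pw y n = pw x j
  | 1, _ => step_left hk h m hm
  | n + 2, _ => by
    obtain ⟨j, hj, hje⟩ := Lx hk h m hm (n + 1) (by omega)
    obtain ⟨j', hj', hje'⟩ := step_left hk h j hj
    exact ⟨j', hj', by rw [pw_succ y (n + 1) (by omega), ← mul_assoc, hje, hje']⟩

/-- If `x*y = y^k`, then `x * y^n` is a power of `y`. -/
lemma step_right {S : Type*} [Semigroup S] {x y : S} {k : ℕ} (hk : 1 ≤ k)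
    (h : x * y = pw y k) : ∀ n, 1 ≤ n → ∃ j, 1 ≤ j ∧ x * pw y n = pw y j
  | 1, _ => ⟨k, hk, h⟩
  | n + 2, _ => by
    obtain ⟨j, hj, hje⟩ := step_right hk h (n + 1) (by omega)
    exact ⟨j + 1, by omega, by
      rw [pw_succ y (n + 1) (by omega), ← mul_assoc, hje, ← pw_succ y j hj]⟩

/-- If `x*y = y^k`, then all `x^m * y^n` lie in `⟨y⟩`. -/
lemma Ly {S : Type*} [Semigroup S] {x y : S} {k : ℕ} (hk : 1 ≤ k)
    (h : x * y = pw y k) : ∀ m, 1 ≤ m → ∀ n, 1 ≤ n →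
      ∃ j, 1 ≤ j ∧ pw x m * pw y n = pw y j
  | 1, _, n, hn => step_right hk h n hn
  | m + 2, _, n, hn => by
    obtain ⟨j, hj, hje⟩ := step_right hk h n hn
    obtain ⟨j', hj', hje'⟩ := Ly hk h (m + 1) (by omega) j hj
    exact ⟨j', hj', by rw [pw_succ x (m + 1) (by omega), mul_assoc, hje, hje']⟩

/-- Key associativity trick: `x*y ∈ ⟨z⟩` and `y*z ∈ ⟨x⟩` contradict `⟨x⟩ ∩ ⟨z⟩ = ∅`. -/
lemma key {S : Type*} [Semigroup S] {x z : S}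
    (h : ∀ s : S, s ∈ genSet x → s ∈ genSet z → False) {y : S}
    (h1 : x * y ∈ genSet z) (h2 : y * z ∈ genSet x) : False := by
  obtain ⟨p, hp, hpe⟩ := h1
  obtain ⟨q, hq, hqe⟩ := h2
  have e1 : x * y * z = pw z (p + 1) := by
    rw [← hpe, ← pw_succ z p hp]
  have e2 : x * (y * z) = pw x (1 + q) := by
    rw [← hqe, ← pw_mul x 1 le_rfl q hq]; rfl
  have e : pw x (1 + q) = pw z (p + 1) := by rw [← e1, ← e2, mul_assoc]
  exact h _ ⟨1 + q, by omega, rfl⟩ ⟨p + 1, by omega, e.symm⟩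

/-- If `⟨x⟩ ∪ ⟨y⟩` is not closed, then `x*y` or `y*x` lies in the third piece. -/
lemma notClosed_imp {S : Type*} [Semigroup S] {x y z : S}
    (hcov : ∀ s : S, s ∈ genSet x ∨ s ∈ genSet y ∨ s ∈ genSet z)
    (h : ¬ IsClosed2 x y) : x * y ∈ genSet z ∨ y * x ∈ genSet z := by
  unfold IsClosed2 at h
  push_neg at h
  obtain ⟨u, hu, v, hv, huv⟩ := h
  have notboth : ∀ w : S, w ∉ genSet x ∪ genSet y → w ∈ genSet z := by
    intro w hw
    rcases hcov w with h' | h' | h'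
    · exact absurd (Or.inl h') hw
    · exact absurd (Or.inr h') hw
    · exact h'
  rcases hu with ⟨m, hm, rfl⟩ | ⟨m, hm, rfl⟩ <;>
    rcases hv with ⟨n, hn, rfl⟩ | ⟨n, hn, rfl⟩
  · exact absurd (Or.inl ⟨m + n, by omega, (pw_mul x m hm n hn).symm⟩) huv
  · -- u = x^m, v = y^n
    left
    apply notboth
    rintro (⟨k, hk, hke⟩ | ⟨k, hk, hke⟩)
    · obtain ⟨j, hj, hje⟩ := Lx hk hke.symm m hm n hn
      exact huv (Or.inl ⟨j, hj, hje.symm⟩)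
    · obtain ⟨j, hj, hje⟩ := Ly hk hke.symm m hm n hn
      exact huv (Or.inr ⟨j, hj, hje.symm⟩)
  · -- u = y^m, v = x^n
    right
    apply notboth
    rintro (⟨k, hk, hke⟩ | ⟨k, hk, hke⟩)
    · obtain ⟨j, hj, hje⟩ := Ly hk hke.symm m hm n hn
      exact huv (Or.inl ⟨j, hj, hje.symm⟩)
    · obtain ⟨j, hj, hje⟩ := Lx hk hke.symm m hm n hn
      exact huv (Or.inr ⟨j, hj, hje.symm⟩)
  · exact absurd (Or.inr ⟨m + n, by omega, (pw_mul y m hm n hn).symm⟩) huv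

/-- If a semigroup is the disjoint union of free monogenic subsemigroups
⟨a⟩, ⟨b⟩, ⟨c⟩, then one of ⟨a⟩∪⟨b⟩, ⟨a⟩∪⟨c⟩, ⟨b⟩∪⟨c⟩ is a subsemigroup. -/
theorem stmt_4 {S : Type*} [Semigroup S] (a b c : S)
    (ha : InfOrder a) (hb : InfOrder b) (hc : InfOrder c)
    (hab : genSet a ∩ genSet b = ∅) (hac : genSet a ∩ genSet c = ∅)
    (hbc : genSet b ∩ genSet c = ∅)
    (hcover : genSet a ∪ genSet b ∪ genSet c = Set.univ) :
    IsClosed2 a b ∨ IsClosed2 a c ∨ IsClosed2 b c := by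
  by_contra hcon
  push_neg at hcon
  obtain ⟨nab, nac, nbc⟩ := hcon
  have hcov : ∀ s : S, s ∈ genSet a ∨ s ∈ genSet b ∨ s ∈ genSet c := by
    intro s
    have : s ∈ genSet a ∪ genSet b ∪ genSet c := hcover.symm ▸ Set.mem_univ s
    rcases this with (h | h) | h
    · exact Or.inl h
    · exact Or.inr (Or.inl h)
    · exact Or.inr (Or.inr h)
  have dab : ∀ s : S, s ∈ genSet a → s ∈ genSet b → False := fun s h1 h2 =>
    Set.eq_empty_iff_forall_notMem.mp hab s ⟨h1, h2⟩
  have dac : ∀ s : S, s ∈ genSet a → s ∈ genSet c → False := fun s h1 h2 =>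
    Set.eq_empty_iff_forall_notMem.mp hac s ⟨h1, h2⟩
  have dbc : ∀ s : S, s ∈ genSet b → s ∈ genSet c → False := fun s h1 h2 =>
    Set.eq_empty_iff_forall_notMem.mp hbc s ⟨h1, h2⟩
  have dba : ∀ s : S, s ∈ genSet b → s ∈ genSet a → False := fun s h1 h2 => dab s h2 h1
  have dca : ∀ s : S, s ∈ genSet c → s ∈ genSet a → False := fun s h1 h2 => dac s h2 h1
  have dcb : ∀ s : S, s ∈ genSet c → s ∈ genSet b → False := fun s h1 h2 => dbc s h2 h1
  have Pab : a * b ∈ genSet c ∨ b * a ∈ genSet c :=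
    notClosed_imp hcov nab
  have Pac : a * c ∈ genSet b ∨ c * a ∈ genSet b :=
    notClosed_imp (fun s => by rcases hcov s with h | h | h <;> tauto) nac
  have Pbc : b * c ∈ genSet a ∨ c * b ∈ genSet a :=
    notClosed_imp (fun s => by rcases hcov s with h | h | h <;> tauto) nbc
  rcases Pab with h1 | h1
  · rcases Pbc with h3 | h3
    · exact key dac h1 h3
    · rcases Pac with h2 | h2
      · exact key dab h2 h3
      · exact key dcb h2 h1
  · rcases Pac with h2 | h2
    · exact key dbc h1 h2
    · rcases Pbc with h3 | h3
      · exact key dba h3 h2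
      · exact key dca h3 h1
end

section
/- Let S be a semigroup that is the disjoint union of free monogenic subsemigroups ⟨a⟩, ⟨b⟩, ⟨c⟩, with ab = ba = a^i and ac, ca ∈ ⟨a⟩. Then either both bc, cb ∈ ⟨a⟩, or both bc, cb ∈ ⟨b⟩∪⟨c⟩. -/
lemma pw_add {S : Type*} [Semigroup S] (a : S) (m n : ℕ) (hm : 1 ≤ m) (hn : 1 ≤ n) :
    pw a m * pw a n = pw a (m + n) := by
  induction n with
  | zero => omega
  | succ k ih =>
    rcases Nat.eq_or_lt_of_le hn with h | h
    · have : k = 0 := by omega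
      subst this
      show pw a m * a = pw a (m + 1)
      obtain ⟨l, rfl⟩ : ∃ l, m = l + 1 := ⟨m - 1, by omega⟩
      rfl
    · have hk : 1 ≤ k := by omega
      have h1 : pw a (k + 1) = pw a k * a := by
        obtain ⟨l, rfl⟩ : ∃ l, k = l + 1 := ⟨k - 1, by omega⟩
        rfl
      rw [h1, ← mul_assoc, ih hk]
      obtain ⟨l, hl⟩ : ∃ l, m + k = l + 1 := ⟨m + k - 1, by omega⟩
      have h2 : m + (k + 1) = l + 2 := by omega
      rw [hl, h2]
      rfl

lemma genSet_mul {S : Type*} [Semigroup S] (a : S) {x y : S}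
    (hx : x ∈ genSet a) (hy : y ∈ genSet a) : x * y ∈ genSet a := by
  obtain ⟨m, hm, rfl⟩ := hx
  obtain ⟨n, hn, rfl⟩ := hy
  exact ⟨m + n, by omega, (pw_add a m n hm hn).symm⟩

lemma right_abs {S : Type*} [Semigroup S] (a z : S) (h : a * z ∈ genSet a)
    {x : S} (hx : x ∈ genSet a) : x * z ∈ genSet a := by
  obtain ⟨m, hm, rfl⟩ := hx
  rcases Nat.eq_or_lt_of_le hm with h1 | h1
  · subst h1; exact h
  · obtain ⟨l, rfl⟩ : ∃ l, m = l + 2 := ⟨m - 2, by omega⟩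
    show pw a (l + 1) * a * z ∈ genSet a
    rw [mul_assoc]
    exact genSet_mul a ⟨l + 1, by omega, rfl⟩ h

lemma left_abs {S : Type*} [Semigroup S] (a z : S) (h : z * a ∈ genSet a)
    {x : S} (hx : x ∈ genSet a) : z * x ∈ genSet a := by
  obtain ⟨m, hm, rfl⟩ := hx
  rcases Nat.eq_or_lt_of_le hm with h1 | h1
  · subst h1; exact h
  · obtain ⟨l, hl⟩ : ∃ l, m = 1 + l := ⟨m - 1, by omega⟩
    have hll : 1 ≤ l := by omega
    rw [hl, ← pw_add a 1 l le_rfl hll, ← mul_assoc]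
    exact genSet_mul a h ⟨l, hll, rfl⟩

theorem stmt_10 {S : Type*} [Semigroup S] (a b c : S)
    (ha : InfOrder a) (hb : InfOrder b) (hc : InfOrder c)
    (hab : genSet a ∩ genSet b = ∅) (hac : genSet a ∩ genSet c = ∅)
    (hbc : genSet b ∩ genSet c = ∅)
    (hcover : genSet a ∪ genSet b ∪ genSet c = Set.univ)
    (i : ℕ) (hi : 1 ≤ i) (h1 : a * b = pw a i) (h2 : b * a = pw a i)
    (h3 : a * c ∈ genSet a) (h4 : c * a ∈ genSet a) :
    (b * c ∈ genSet a ∧ c * b ∈ genSet a) ∨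
      (b * c ∈ genSet b ∪ genSet c ∧ c * b ∈ genSet b ∪ genSet c) := by
  have hia : pw a i ∈ genSet a := ⟨i, hi, rfl⟩
  have hab' : a * b ∈ genSet a := h1 ▸ hia
  have hba' : b * a ∈ genSet a := h2 ▸ hia
  -- a square of an element of genSet b (or genSet c) can't lie in genSet a
  have sq_not : ∀ y : S, y ∈ genSet b ∪ genSet c → y * y ∈ genSet a → False := by
    intro y hy hsq
    rcases hy with hy | hy
    · exact Set.eq_empty_iff_forall_notMem.mp hab (y * y) ⟨hsq, genSet_mul b hy hy⟩
    · exact Set.eq_empty_iff_forall_notMem.mp hac (y * y) ⟨hsq, genSet_mul c hy hy⟩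
  have hbc_mem : b * c ∈ genSet a ∪ (genSet b ∪ genSet c) := by
    have h := Set.mem_univ (b * c)
    rw [← hcover] at h
    rwa [Set.union_assoc] at h
  have hcb_mem : c * b ∈ genSet a ∪ (genSet b ∪ genSet c) := by
    have h := Set.mem_univ (c * b)
    rw [← hcover] at h
    rwa [Set.union_assoc] at h
  rcases hbc_mem with hbc1 | hbc1 <;> rcases hcb_mem with hcb1 | hcb1
  · exact Or.inl ⟨hbc1, hcb1⟩
  · -- b*c ∈ ⟨a⟩, c*b ∈ ⟨b⟩∪⟨c⟩ : contradiction
    exfalso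
    apply sq_not (c * b) hcb1
    have key : (c * b) * (c * b) = (c * (b * c)) * b := by
      simp only [mul_assoc]
    rw [key]
    exact right_abs a b hab' (left_abs a c h4 hbc1)
  · -- c*b ∈ ⟨a⟩, b*c ∈ ⟨b⟩∪⟨c⟩ : contradiction
    exfalso
    apply sq_not (b * c) hbc1
    have key : (b * c) * (b * c) = (b * (c * b)) * c := by
      simp only [mul_assoc]
    rw [key]
    exact right_abs a c h3 (left_abs a b hba' hcb1)
  · exact Or.inr ⟨hbc1, hcb1⟩
end
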